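/- φ̃(n) = 3 if and only if n ∈ {7, 9, 16, 36, 48, 90}. -/
import Mathlib


/-- φ̃(n): number of m with 1 ≤ m ≤ n, gcd(m,n)=1, m not prime. -/
def phiT (n : ℕ) : ℕ :=
  ((Finset.Icc 1 n).filter (fun m => Nat.gcd m n = 1 ∧ ¬ m.Prime)).card

/-- The product of the first k primes. -/
noncomputable def primorialN (k : ℕ) : ℕ := ∏ i ∈ Finset.range k, Nat.nth Nat.Prime i

private lemma infP : {p | Nat.Prime p}.Infinite := Nat.infinite_setOf_prime

private lemma nth_prime_five : Nat.nth Nat.Prime 5 = 13 := by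
  have := Nat.nth_count (p := Nat.Prime) (n := 13) (by norm_num)
  rwa [show Nat.count Nat.Prime 13 = 5 from by decide] at this

private lemma nth_prime_vals :
    Nat.nth Nat.Prime 0 = 2 ∧ Nat.nth Nat.Prime 1 = 3 ∧ Nat.nth Nat.Prime 2 = 5 ∧
      Nat.nth Nat.Prime 3 = 7 := by
  refine ⟨?_, ?_, ?_, ?_⟩
  · have := Nat.nth_count (p := Nat.Prime) (n := 2) (by norm_num)
    rwa [show Nat.count Nat.Prime 2 = 0 from by decide] at this
  · have := Nat.nth_count (p := Nat.Prime) (n := 3) (by norm_num)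
    rwa [show Nat.count Nat.Prime 3 = 1 from by decide] at this
  · have := Nat.nth_count (p := Nat.Prime) (n := 5) (by norm_num)
    rwa [show Nat.count Nat.Prime 5 = 2 from by decide] at this
  · have := Nat.nth_count (p := Nat.Prime) (n := 7) (by norm_num)
    rwa [show Nat.count Nat.Prime 7 = 3 from by decide] at this

private lemma primorialN_four : primorialN 4 = 210 := by
  obtain ⟨h0, h1, h2, h3⟩ := nth_prime_vals
  simp [primorialN, Finset.prod_range_succ, h0, h1, h2, h3]

/-- Bertrand for consecutive primes. -/
private lemma nth_prime_succ_le (k : ℕ) :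
    Nat.nth Nat.Prime (k + 1) ≤ 2 * Nat.nth Nat.Prime k := by
  obtain ⟨r, hr, hgt, hle⟩ :=
    Nat.exists_prime_lt_and_le_two_mul (Nat.nth Nat.Prime k)
      (Nat.prime_nth_prime k).pos.ne'
  have hcount : k < Nat.count Nat.Prime r := (Nat.lt_nth_iff_count_lt infP).2 hgt
  have : Nat.nth Nat.Prime (k + 1) ≤ Nat.nth Nat.Prime (Nat.count Nat.Prime r) :=
    (Nat.nth_le_nth infP).2 hcount
  rw [Nat.nth_count hr] at this
  exact this.trans hle

/-- For k ≥ 4, the square of the (k+1)-st prime is at most the product of the first k primes. -/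
private lemma sq_nth_le_primorial : ∀ k, 4 ≤ k →
    (Nat.nth Nat.Prime (k + 1)) ^ 2 ≤ primorialN k := by
  intro k hk
  induction k, hk using Nat.le_induction with
  | base =>
    rw [show 4+1=5 from rfl, primorialN_four, nth_prime_five]; norm_num
  | succ k hk ih =>
    have hstep : primorialN (k + 1) = primorialN k * Nat.nth Nat.Prime k :=
      Finset.prod_range_succ _ _
    have hb := nth_prime_succ_le (k + 1)
    have hk4 : 4 ≤ Nat.nth Nat.Prime k := by
      have := Nat.add_two_le_nth_prime k
      omega
    calc (Nat.nth Nat.Prime (k + 2)) ^ 2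
        ≤ (2 * Nat.nth Nat.Prime (k + 1)) ^ 2 := Nat.pow_le_pow_left hb 2
      _ = 4 * (Nat.nth Nat.Prime (k + 1)) ^ 2 := by ring
      _ ≤ Nat.nth Nat.Prime k * (Nat.nth Nat.Prime (k + 1)) ^ 2 :=
          Nat.mul_le_mul_right _ hk4
      _ ≤ Nat.nth Nat.Prime k * primorialN k := Nat.mul_le_mul_left _ ih
      _ = primorialN (k + 1) := by rw [hstep, Nat.mul_comm]

/-- For n ≥ 169 there are two primes not dividing n whose squares are at most n. -/
private lemma exists_two_primes (n : ℕ) (hn : 169 ≤ n) :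
    ∃ p q : ℕ, p.Prime ∧ q.Prime ∧ p < q ∧ ¬ p ∣ n ∧ ¬ q ∣ n ∧ q ^ 2 ≤ n := by
  have hn0 : 0 < n := by omega
  have hA : ∃ m, Nat.Prime m ∧ ¬ m ∣ n := by
    obtain ⟨r, hrle, hr⟩ := Nat.exists_infinite_primes (n + 1)
    exact ⟨r, hr, fun hd => by have := Nat.le_of_dvd hn0 hd; omega⟩
  classical
  set p := Nat.find hA with hp_def
  obtain ⟨hp, hpn⟩ : Nat.Prime p ∧ ¬ p ∣ n := Nat.find_spec hA
  have hB : ∃ m, Nat.Prime m ∧ ¬ m ∣ n ∧ p < m := by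
    obtain ⟨r, hrle, hr⟩ := Nat.exists_infinite_primes (n + p + 1)
    exact ⟨r, hr, fun hd => by have := Nat.le_of_dvd hn0 hd; omega, by omega⟩
  set q := Nat.find hB with hq_def
  obtain ⟨hq, hqn, hpq⟩ : Nat.Prime q ∧ ¬ q ∣ n ∧ p < q := Nat.find_spec hB
  refine ⟨p, q, hp, hq, hpq, hpn, hqn, ?_⟩
  by_contra hq2
  push_neg at hq2
  -- every prime below q other than p divides n
  have hall : ∀ r : ℕ, r.Prime → r < q → r ≠ p → r ∣ n := by
    intro r hr hrq hrp
    by_contra hrn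
    have h1 : p ≤ r := Nat.find_min' hA ⟨hr, hrn⟩
    have h2 : q ≤ r := Nat.find_min' hB ⟨hr, hrn, lt_of_le_of_ne h1 (Ne.symm hrp)⟩
    omega
  have hq13 : 13 < q := by nlinarith
  obtain ⟨j, i0, hqj, hj6, hpi, hi0j⟩ :
      ∃ j i0, Nat.nth Nat.Prime j = q ∧ 6 ≤ j ∧ Nat.nth Nat.Prime i0 = p ∧ i0 < j := by
    refine ⟨Nat.count Nat.Prime q, Nat.count Nat.Prime p, Nat.nth_count hq, ?_,
      Nat.nth_count hp, Nat.count_strict_mono hp hpq⟩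
    have h14 : Nat.count Nat.Prime 14 ≤ Nat.count Nat.Prime q :=
      Nat.count_monotone _ (by omega)
    have : Nat.count Nat.Prime 14 = 6 := by decide
    omega
  set s : Finset ℕ := (Finset.range j).erase i0 with hs_def
  -- product of the other primes below q divides n
  set t : Finset ℕ := s.image (Nat.nth Nat.Prime) with ht_def
  have hinj : Function.Injective (Nat.nth Nat.Prime) :=
    (Nat.nth_injective infP)
  have ht_prime : ∀ r ∈ t, Prime r := by
    intro r hr
    obtain ⟨i, _, rfl⟩ := Finset.mem_image.1 hr
    exact (Nat.prime_nth_prime i).prime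
  have ht_dvd : ∀ r ∈ t, r ∣ n := by
    intro r hr
    obtain ⟨i, hi, rfl⟩ := Finset.mem_image.1 hr
    obtain ⟨hii0, hij⟩ := Finset.mem_erase.1 hi
    have hij' : i < j := Finset.mem_range.1 hij
    have hlt : Nat.nth Nat.Prime i < q := by
      rw [← hqj]; exact (Nat.nth_lt_nth infP).2 hij'
    have hne : Nat.nth Nat.Prime i ≠ p := by
      rw [← hpi]; exact fun h => hii0 (hinj h)
    exact hall _ (Nat.prime_nth_prime i) hlt hne
  have hdvd : ∏ r ∈ t, r ∣ n := Finset.prod_primes_dvd n ht_prime ht_dvd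
  have hprod_eq : ∏ r ∈ t, r = ∏ i ∈ s, Nat.nth Nat.Prime i :=
    Finset.prod_image (fun a _ b _ h => hinj h)
  have hle_n : ∏ i ∈ s, Nat.nth Nat.Prime i ≤ n := by
    rw [← hprod_eq]; exact Nat.le_of_dvd hn0 hdvd
  -- the product over s times p is the primorial
  obtain ⟨m, rfl⟩ : ∃ m, j = m + 1 := ⟨j - 1, by omega⟩
  have hfull : (∏ i ∈ s, Nat.nth Nat.Prime i) * p = primorialN (m + 1) := by
    rw [← hpi]
    exact Finset.prod_erase_mul _ _ (Finset.mem_range.2 hi0j)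
  have hsplit : primorialN (m + 1) = primorialN m * Nat.nth Nat.Prime m :=
    Finset.prod_range_succ _ _
  have hple : p ≤ Nat.nth Nat.Prime m := by
    rw [← hpi]; exact (Nat.nth_le_nth infP).2 (by omega)
  have hPm : primorialN m ≤ ∏ i ∈ s, Nat.nth Nat.Prime i := by
    have hpos : 0 < Nat.nth Nat.Prime m := (Nat.prime_nth_prime m).pos
    have : primorialN m * Nat.nth Nat.Prime m ≤
        (∏ i ∈ s, Nat.nth Nat.Prime i) * Nat.nth Nat.Prime m := by
      calc primorialN m * Nat.nth Nat.Prime m = (∏ i ∈ s, Nat.nth Nat.Prime i) * p := by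
            rw [hfull, hsplit]
        _ ≤ (∏ i ∈ s, Nat.nth Nat.Prime i) * Nat.nth Nat.Prime m :=
            Nat.mul_le_mul_left _ hple
    exact Nat.le_of_mul_le_mul_right this hpos
  have hD : q ^ 2 ≤ primorialN m := by
    rw [← hqj]
    exact sq_nth_le_primorial m (by omega)
  omega

private lemma four_le_phiT (n p q : ℕ) (hp : p.Prime) (hq : q.Prime) (hpq : p < q)
    (hpn : ¬ p ∣ n) (hqn : ¬ q ∣ n) (hq2 : q ^ 2 ≤ n) : 4 ≤ phiT n := by
  have hp2 : 2 ≤ p := hp.two_le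
  have hq2' : 2 ≤ q := hq.two_le
  have hcp : Nat.Coprime p n := hp.coprime_iff_not_dvd.2 hpn
  have hcq : Nat.Coprime q n := hq.coprime_iff_not_dvd.2 hqn
  have h1 : p ^ 2 < p * q := by nlinarith
  have h2 : p * q < q ^ 2 := by nlinarith
  have h3 : 1 < p ^ 2 := by nlinarith
  set F : Finset ℕ := {1, p ^ 2, p * q, q ^ 2} with hF_def
  have hsub : F ⊆ (Finset.Icc 1 n).filter (fun m => Nat.gcd m n = 1 ∧ ¬ m.Prime) := by
    intro m hm
    simp only [hF_def, Finset.mem_insert, Finset.mem_singleton] at hm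
    rw [Finset.mem_filter, Finset.mem_Icc]
    rcases hm with rfl | rfl | rfl | rfl
    · exact ⟨⟨le_refl 1, by nlinarith⟩, Nat.gcd_one_left n, Nat.not_prime_one⟩
    · refine ⟨⟨by nlinarith, by nlinarith⟩, ?_, ?_⟩
      · exact hcp.pow_left 2
      · rw [pow_two]; exact Nat.not_prime_mul (by omega) (by omega)
    · refine ⟨⟨by nlinarith, by omega⟩, ?_, Nat.not_prime_mul (by omega) (by omega)⟩
      exact hcp.mul hcq
    · refine ⟨⟨by nlinarith, hq2⟩, ?_, ?_⟩
      · exact hcq.pow_left 2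
      · rw [pow_two]; exact Nat.not_prime_mul (by omega) (by omega)
  have hcard : F.card = 4 := by
    rw [hF_def]
    rw [Finset.card_insert_of_notMem (by simp; omega),
      Finset.card_insert_of_notMem (by simp; omega),
      Finset.card_insert_of_notMem (by simp; omega), Finset.card_singleton]
  have := Finset.card_le_card hsub
  rw [hcard] at this
  exact this

set_option maxRecDepth 40000 in
theorem stmt16 (n : ℕ) (hn : 0 < n) :
    phiT n = 3 ↔ n ∈ ({7, 9, 16, 36, 48, 90} : Finset ℕ) := by
  rcases le_or_gt 169 n with h | h
  · obtain ⟨p, q, hp, hq, hpq, hpn, hqn, hq2⟩ := exists_two_primes n h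
    have h4 := four_le_phiT n p q hp hq hpq hpn hqn hq2
    constructor
    · intro h3; omega
    · intro hmem
      simp only [Finset.mem_insert, Finset.mem_singleton] at hmem
      omega
  · interval_cases n <;> decide
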